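/- arXiv:2308.16302 — 3 statements merged into one kernel-verified Lean document; each statement's English description precedes it below -/
import Mathlib

section
/- Let N be a prime, let n1, n2 be integers with N ∤ n1 and N ∤ n2, and let χ be any Dirichlet character modulo N. Then Σ_{a mod N, gcd(a,N)=1} χ(a) · S(n1, a; N) · S(n2, a; N) = G_χ(1)² · Σ_{u mod N, gcd(u,N)=1} conj(χ)(u+1) · conj(χ)(n1·u⁻¹ + n2) + δ_χ · D(n1, n2), where u⁻¹ is the inverse of u modulo N, δ_χ = 1 if χ is the principal character modulo N and δ_χ = 0 otherwise, and D(n1,n2) = φ(N)² if N | n1 − n2 and D(n1,n2) = −2φ(N) otherwise. -/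
/-- `e(x/q)`-type additive character: for `x : ZMod q`, `eZMod q x = exp(2πi·x/q)`. -/
noncomputable def eZMod (q : ℕ) (x : ZMod q) : ℂ :=
  Complex.exp (2 * Real.pi * Complex.I * (x.val : ℂ) / (q : ℂ))

/-- Kloosterman sum `S(m, n; q) = Σ_{d mod q, gcd(d,q)=1} e((m·d + n·d⁻¹)/q)`. -/
noncomputable def kloostermanS (q : ℕ) (m n : ZMod q) : ℂ :=
  ∑ d ∈ (Finset.range q).filter (fun d => Nat.gcd d q = 1),
    eZMod q (m * (d : ZMod q) + n * ((d : ZMod q)⁻¹))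

/-- Gauss sum `G_χ(n) = Σ_{a mod q} χ(a) e(a·n/q)`. -/
noncomputable def gaussS (q : ℕ) (χ : DirichletCharacter ℂ q) (n : ZMod q) : ℂ :=
  ∑ a ∈ Finset.range q, χ (a : ZMod q) * eZMod q ((a : ZMod q) * n)

/-- Ramanujan sum `R(n, q) = Σ_{a mod q, gcd(a,q)=1} e(a·n/q)`. -/
noncomputable def ramanujanS (q : ℕ) (n : ZMod q) : ℂ :=
  ∑ a ∈ (Finset.range q).filter (fun a => Nat.gcd a q = 1), eZMod q ((a : ZMod q) * n)

section Aux

variable {N : ℕ} [NeZero N]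

lemma exp_nat_eq (a : ℕ) : Complex.exp (2 * Real.pi * Complex.I * ((a % N : ℕ) : ℂ) / N)
    = Complex.exp (2 * Real.pi * Complex.I * (a : ℂ) / N) := by
  conv_rhs => rw [← Nat.mod_add_div a N]
  push_cast
  rw [mul_add, add_div, Complex.exp_add]
  have hN : (N : ℂ) ≠ 0 := Nat.cast_ne_zero.mpr (NeZero.ne N)
  have : 2 * (Real.pi : ℂ) * Complex.I * ((N : ℂ) * ((a / N : ℕ) : ℂ)) / N
      = ((a / N : ℕ) : ℂ) * (2 * Real.pi * Complex.I) := by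
    field_simp
  rw [this, Complex.exp_nat_mul_two_pi_mul_I, mul_one]

lemma eZMod_add (x y : ZMod N) : eZMod N (x + y) = eZMod N x * eZMod N y := by
  unfold eZMod
  rw [ZMod.val_add, exp_nat_eq, ← Complex.exp_add]
  push_cast
  ring_nf

lemma eZMod_zero : eZMod N (0 : ZMod N) = 1 := by
  simp [eZMod]

lemma eZMod_ne_one {t : ZMod N} (ht : t ≠ 0) : eZMod N t ≠ 1 := by
  unfold eZMod
  intro h
  rw [Complex.exp_eq_one_iff] at h
  obtain ⟨k, hk⟩ := h
  have hN : (N : ℂ) ≠ 0 := Nat.cast_ne_zero.mpr (NeZero.ne N)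
  have hpi : (2 : ℂ) * Real.pi * Complex.I ≠ 0 := by
    simp [Real.pi_ne_zero, Complex.I_ne_zero]
  have hv : (t.val : ℂ) = (k : ℂ) * N := by
    rw [div_eq_iff hN] at hk
    have h2 : (2 : ℂ) * Real.pi * Complex.I * (t.val : ℂ)
        = (2 : ℂ) * Real.pi * Complex.I * ((k : ℂ) * N) := by
      rw [hk]; ring
    exact mul_left_cancel₀ hpi h2
  have hvz : (t.val : ℤ) = k * N := by exact_mod_cast hv
  have h1 : 0 < t.val := Nat.pos_of_ne_zero (fun h0 => ht (by
    have := ZMod.natCast_rightInverse (n := N) t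
    rw [← this, h0, Nat.cast_zero]))
  have h2 : t.val < N := ZMod.val_lt t
  have : (N : ℤ) ∣ (t.val : ℤ) := ⟨k, by linarith [hvz]⟩
  have := Int.le_of_dvd (by exact_mod_cast h1) this
  omega

lemma sum_eZMod_mul (t : ZMod N) :
    ∑ x : ZMod N, eZMod N (x * t) = if t = 0 then (N : ℂ) else 0 := by
  split_ifs with h
  · simp [h, eZMod_zero, ZMod.card]
  · have key : eZMod N t * ∑ x : ZMod N, eZMod N (x * t) = ∑ x : ZMod N, eZMod N (x * t) := by
      rw [Finset.mul_sum]
      refine Finset.sum_nbij' (fun x => x + 1) (fun x => x - 1) (by simp) (by simp)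
        (by intros; ring) (by intros; ring) ?_
      intro x _
      have hx : (x + 1) * t = x * t + t := by ring
      rw [hx, eZMod_add, mul_comm]
    have h0 : (eZMod N t - 1) * ∑ x : ZMod N, eZMod N (x * t) = 0 := by
      rw [sub_mul, one_mul, key, sub_self]
    rcases mul_eq_zero.mp h0 with h' | h'
    · exact absurd (sub_eq_zero.mp h') (eZMod_ne_one h)
    · exact h'

section Prime

variable {N : ℕ} [hNp : Fact N.Prime]

lemma conj_chi_mul (χ : DirichletCharacter ℂ N) {t : ZMod N} (ht : t ≠ 0) :
    (starRingEnd ℂ) (χ t) * χ t = 1 := by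
  have hu : χ t ^ (N - 1) = 1 := by
    rw [← map_pow, ZMod.pow_card_sub_one_eq_one ht, map_one]
  have hn : ‖χ t‖ = 1 := Complex.norm_eq_one_of_pow_eq_one hu
    (by have := hNp.out.one_lt; omega)
  have h2 : (χ t) * (starRingEnd ℂ) (χ t) = Complex.normSq (χ t) := Complex.mul_conj _
  rw [mul_comm] at h2
  have h3 : Complex.normSq (χ t) = 1 := by
    rw [Complex.normSq_eq_norm_sq, hn, one_pow]
  rw [h2, h3, Complex.ofReal_one]

lemma conj_chi_eq_inv (χ : DirichletCharacter ℂ N) {t : ZMod N} (ht : t ≠ 0) :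
    (starRingEnd ℂ) (χ t) = χ t⁻¹ := by
  have h1 : χ t * χ t⁻¹ = 1 := by
    rw [← map_mul, mul_inv_cancel₀ ht, map_one]
  calc (starRingEnd ℂ) (χ t) = (starRingEnd ℂ) (χ t) * (χ t * χ t⁻¹) := by rw [h1, mul_one]
    _ = ((starRingEnd ℂ) (χ t) * χ t) * χ t⁻¹ := by ring
    _ = χ t⁻¹ := by rw [conj_chi_mul χ ht, one_mul]

lemma sum_range_all (f : ZMod N → ℂ) :
    ∑ a ∈ Finset.range N, f ((a : ℕ) : ZMod N) = ∑ x : ZMod N, f x := by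
  haveI : NeZero N := ⟨hNp.out.ne_zero⟩
  refine Finset.sum_nbij' (fun a => ((a : ℕ) : ZMod N)) (fun x => x.val) ?_ ?_ ?_ ?_ ?_
  · intro a _; exact Finset.mem_univ _
  · intro x _; exact Finset.mem_range.mpr (ZMod.val_lt x)
  · intro a ha; exact ZMod.val_cast_of_lt (Finset.mem_range.mp ha)
  · intro x _; exact ZMod.natCast_rightInverse x
  · intro a _; rfl

lemma sum_range_units (f : ZMod N → ℂ) :
    ∑ a ∈ (Finset.range N).filter (fun a => Nat.gcd a N = 1), f ((a : ℕ) : ZMod N)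
      = ∑ x ∈ Finset.univ.filter (fun x : ZMod N => x ≠ 0), f x := by
  haveI : NeZero N := ⟨hNp.out.ne_zero⟩
  refine Finset.sum_nbij' (fun a => ((a : ℕ) : ZMod N)) (fun x => x.val) ?_ ?_ ?_ ?_ ?_
  · intro a ha
    rw [Finset.mem_filter] at ha
    refine Finset.mem_filter.mpr ⟨Finset.mem_univ _, ?_⟩
    exact ((ZMod.isUnit_iff_coprime a N).mpr ha.2).ne_zero
  · intro x hx
    rw [Finset.mem_filter] at hx
    refine Finset.mem_filter.mpr ⟨Finset.mem_range.mpr (ZMod.val_lt x), ?_⟩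
    have hux : IsUnit x := isUnit_iff_ne_zero.mpr hx.2
    have : ((x.val : ℕ) : ZMod N) = x := ZMod.natCast_rightInverse x
    exact (ZMod.isUnit_iff_coprime x.val N).mp (by rw [this]; exact hux)
  · intro a ha; exact ZMod.val_cast_of_lt (Finset.mem_range.mp (Finset.mem_filter.mp ha).1)
  · intro x _; exact ZMod.natCast_rightInverse x
  · intro a _; rfl

lemma sum_S_e (s : ZMod N) :
    ∑ x ∈ Finset.univ.filter (fun x : ZMod N => x ≠ 0), eZMod N (x * s)
      = if s = 0 then ((N : ℂ) - 1) else -1 := by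
  haveI : NeZero N := ⟨hNp.out.ne_zero⟩
  have h0 : (∑ x ∈ Finset.univ.filter (fun x : ZMod N => x ≠ 0), eZMod N (x * s))
      + eZMod N ((0 : ZMod N) * s) = ∑ x : ZMod N, eZMod N (x * s) := by
    rw [Finset.filter_ne']
    exact Finset.sum_erase_add _ _ (Finset.mem_univ 0)
  rw [zero_mul, eZMod_zero] at h0
  have h1 := sum_eZMod_mul (N := N) s
  rw [h1] at h0
  split_ifs at h0 ⊢ with h
  · linear_combination h0
  · linear_combination h0

lemma card_S : (Finset.univ.filter (fun x : ZMod N => x ≠ 0)).card = N - 1 := by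
  haveI : NeZero N := ⟨hNp.out.ne_zero⟩
  rw [Finset.filter_ne', Finset.card_erase_of_mem (Finset.mem_univ 0)]
  simp [ZMod.card]

lemma g_eq (χ : DirichletCharacter ℂ N) (t : ZMod N) :
    ∑ a ∈ Finset.univ.filter (fun x : ZMod N => x ≠ 0), χ a * eZMod N (a * t)
      = (starRingEnd ℂ) (χ t) *
          (∑ a ∈ Finset.univ.filter (fun x : ZMod N => x ≠ 0), χ a * eZMod N a)
        + (if χ = 1 ∧ t = 0 then ((N : ℂ) - 1) else 0) := by
  haveI : NeZero N := ⟨hNp.out.ne_zero⟩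
  by_cases ht : t = 0
  · subst ht
    have hχ0 : χ (0 : ZMod N) = 0 := χ.map_nonunit not_isUnit_zero
    rw [hχ0, map_zero, zero_mul, zero_add]
    simp only [mul_zero, eZMod_zero, mul_one]
    by_cases hχ : χ = 1
    · subst hχ
      rw [if_pos (by simp)]
      rw [Finset.sum_congr rfl (fun a ha => MulChar.one_apply
        (isUnit_iff_ne_zero.mpr (Finset.mem_filter.mp ha).2))]
      rw [Finset.sum_const, nsmul_eq_mul, mul_one, card_S]
      have : 1 ≤ N := hNp.out.one_lt.le
      push_cast [Nat.cast_sub this]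
      ring
    · rw [if_neg (fun hc => hχ hc.1)]
      have : ∑ a ∈ Finset.univ.filter (fun x : ZMod N => x ≠ 0), χ a = ∑ a : ZMod N, χ a := by
        refine Finset.sum_subset (Finset.filter_subset _ _) ?_
        intro x _ hx
        simp only [Finset.mem_filter, Finset.mem_univ, true_and, not_not] at hx
        rw [hx, hχ0]
      rw [this, MulChar.sum_eq_zero_of_ne_one hχ]
  · rw [if_neg (fun hc => ht hc.2), add_zero]
    have step : ∑ a ∈ Finset.univ.filter (fun x : ZMod N => x ≠ 0), χ a * eZMod N (a * t)
        = ∑ b ∈ Finset.univ.filter (fun x : ZMod N => x ≠ 0), χ (b * t⁻¹) * eZMod N b := by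
      refine Finset.sum_nbij' (fun a => a * t) (fun b => b * t⁻¹) ?_ ?_ ?_ ?_ ?_
      · intro a ha
        simp only [Finset.mem_filter, Finset.mem_univ, true_and] at ha ⊢
        exact mul_ne_zero ha ht
      · intro b hb
        simp only [Finset.mem_filter, Finset.mem_univ, true_and] at hb ⊢
        exact mul_ne_zero hb (inv_ne_zero ht)
      · intro a _; field_simp
      · intro b _; field_simp
      · intro a _
        rw [mul_inv_cancel_right₀ ht]
    rw [step, conj_chi_eq_inv χ ht, Finset.mul_sum]
    refine Finset.sum_congr rfl ?_
    intro b _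
    rw [map_mul]
    ring

end Prime

end Aux

open scoped Classical

/-- For `N` prime, `N ∤ n1, n2`, and `χ` a Dirichlet character mod `N`:
`Σ_{a mod N, (a,N)=1} χ(a) S(n1,a;N) S(n2,a;N)
  = G_χ(1)² Σ_{u mod N, (u,N)=1} conj(χ)(u+1) conj(χ)(n1 u⁻¹ + n2) + δ_χ D(n1,n2)`,
where `δ_χ = 1` iff `χ` is principal, and `D(n1,n2) = φ(N)²` if `N ∣ n1 − n2`,
`D(n1,n2) = −2φ(N)` otherwise. -/
theorem stmt2 (N : ℕ) (hN : N.Prime) (n1 n2 : ℤ)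
    (h1 : ¬ (N : ℤ) ∣ n1) (h2 : ¬ (N : ℤ) ∣ n2) (χ : DirichletCharacter ℂ N) :
    ∑ a ∈ (Finset.range N).filter (fun a => Nat.gcd a N = 1),
        χ ((a : ℕ) : ZMod N) * kloostermanS N (n1 : ZMod N) ((a : ℕ) : ZMod N) *
          kloostermanS N (n2 : ZMod N) ((a : ℕ) : ZMod N) =
      (gaussS N χ (1 : ZMod N)) ^ 2 *
          ∑ u ∈ (Finset.range N).filter (fun u => Nat.gcd u N = 1),
            (starRingEnd ℂ) (χ (((u : ℕ) : ZMod N) + 1)) *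
              (starRingEnd ℂ) (χ ((n1 : ZMod N) * (((u : ℕ) : ZMod N))⁻¹ + (n2 : ZMod N)))
        + (if χ = 1 then (1 : ℂ) else 0) *
            (if (N : ℤ) ∣ n1 - n2 then ((N.totient : ℂ)) ^ 2 else -2 * (N.totient : ℂ)) := by
  haveI hF : Fact N.Prime := ⟨hN⟩
  haveI : NeZero N := ⟨hN.ne_zero⟩
  set S : Finset (ZMod N) := Finset.univ.filter (fun x : ZMod N => x ≠ 0) with hSdef
  set m1 : ZMod N := (n1 : ZMod N) with hm1def
  set m2 : ZMod N := (n2 : ZMod N) with hm2def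
  have hm1 : m1 ≠ 0 := by rw [hm1def, Ne, ZMod.intCast_zmod_eq_zero_iff_dvd]; exact h1
  have hm2 : m2 ≠ 0 := by rw [hm2def, Ne, ZMod.intCast_zmod_eq_zero_iff_dvd]; exact h2
  set G' : ℂ := ∑ a ∈ S, χ a * eZMod N a with hG'def
  -- Gauss sum transfer
  have hG : gaussS N χ 1 = G' := by
    rw [gaussS, sum_range_all (f := fun x => χ x * eZMod N (x * 1)), hG'def]
    simp only [mul_one]
    refine (Finset.sum_subset (Finset.filter_subset _ _) ?_).symm
    intro x _ hx
    simp only [hSdef, Finset.mem_filter, Finset.mem_univ, true_and, not_not] at hx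
    rw [hx, χ.map_nonunit not_isUnit_zero, zero_mul]
  -- Kloosterman transfer
  have hK : ∀ (m a : ZMod N), kloostermanS N m a = ∑ d ∈ S, eZMod N (m * d + a * d⁻¹) :=
    fun m a => sum_range_units (f := fun d => eZMod N (m * d + a * d⁻¹))
  -- principal character value on S
  have hone : ∀ x ∈ S, (1 : DirichletCharacter ℂ N) x = 1 := fun x hx =>
    MulChar.one_apply (isUnit_iff_ne_zero.mpr (Finset.mem_filter.mp hx).2)
  -- G' for principal character
  have hG1 : χ = 1 → G' = -1 := by
    intro hχ
    rw [hG'def, Finset.sum_congr rfl (fun a ha => by rw [hχ, hone a ha, one_mul])]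
    have := sum_S_e (N := N) 1
    rw [if_neg (one_ne_zero)] at this
    rw [← this]
    exact Finset.sum_congr rfl (fun a _ => by rw [mul_one])
  -- Step 1: expand the Kloosterman sums
  have step1 : ∑ a ∈ (Finset.range N).filter (fun a => Nat.gcd a N = 1),
        χ ((a : ℕ) : ZMod N) * kloostermanS N m1 ((a : ℕ) : ZMod N) *
          kloostermanS N m2 ((a : ℕ) : ZMod N)
      = ∑ d1 ∈ S, ∑ d2 ∈ S, (eZMod N (m1 * d1) * eZMod N (m2 * d2)) *
          ∑ a ∈ S, χ a * eZMod N (a * (d1⁻¹ + d2⁻¹)) := by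
    rw [sum_range_units (f := fun a => χ a * kloostermanS N m1 a * kloostermanS N m2 a)]
    have e1 : ∀ a ∈ S, χ a * kloostermanS N m1 a * kloostermanS N m2 a
        = ∑ d1 ∈ S, ∑ d2 ∈ S, (eZMod N (m1 * d1) * eZMod N (m2 * d2)) *
            (χ a * eZMod N (a * (d1⁻¹ + d2⁻¹))) := by
      intro a _
      rw [hK, hK, mul_assoc, Finset.sum_mul_sum, Finset.mul_sum]
      refine Finset.sum_congr rfl (fun d1 _ => ?_)
      rw [Finset.mul_sum]
      refine Finset.sum_congr rfl (fun d2 _ => ?_)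
      rw [eZMod_add, eZMod_add]
      have : a * (d1⁻¹ + d2⁻¹) = a * d1⁻¹ + a * d2⁻¹ := by ring
      rw [this, eZMod_add]
      ring
    rw [Finset.sum_congr rfl e1]
    rw [Finset.sum_comm]
    refine Finset.sum_congr rfl (fun d1 _ => ?_)
    rw [Finset.sum_comm]
    refine Finset.sum_congr rfl (fun d2 _ => ?_)
    rw [← Finset.mul_sum]
  -- split using g_eq
  have step2 : ∑ d1 ∈ S, ∑ d2 ∈ S, (eZMod N (m1 * d1) * eZMod N (m2 * d2)) *
          ∑ a ∈ S, χ a * eZMod N (a * (d1⁻¹ + d2⁻¹))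
      = (∑ d1 ∈ S, ∑ d2 ∈ S, (eZMod N (m1 * d1) * eZMod N (m2 * d2)) *
          ((starRingEnd ℂ) (χ (d1⁻¹ + d2⁻¹)) * G'))
      + (∑ d1 ∈ S, ∑ d2 ∈ S, (eZMod N (m1 * d1) * eZMod N (m2 * d2)) *
          (if χ = 1 ∧ d1⁻¹ + d2⁻¹ = 0 then ((N : ℂ) - 1) else 0)) := by
    rw [← Finset.sum_add_distrib]
    refine Finset.sum_congr rfl (fun d1 _ => ?_)
    rw [← Finset.sum_add_distrib]
    refine Finset.sum_congr rfl (fun d2 _ => ?_)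
    rw [g_eq χ (d1⁻¹ + d2⁻¹), mul_add]
  -- B-term
  have hB : (∑ d1 ∈ S, ∑ d2 ∈ S, (eZMod N (m1 * d1) * eZMod N (m2 * d2)) *
          (if χ = 1 ∧ d1⁻¹ + d2⁻¹ = 0 then ((N : ℂ) - 1) else 0))
      = (if χ = 1 then (1:ℂ) else 0) * ((N : ℂ) - 1) *
          (if m1 = m2 then ((N : ℂ) - 1) else -1) := by
    by_cases hχ : χ = 1
    · simp only [hχ, true_and, if_true, one_mul]
      have inner : ∀ d1 ∈ S, (∑ d2 ∈ S, (eZMod N (m1 * d1) * eZMod N (m2 * d2)) *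
          (if d1⁻¹ + d2⁻¹ = 0 then ((N : ℂ) - 1) else 0))
          = eZMod N (d1 * (m1 - m2)) * ((N : ℂ) - 1) := by
        intro d1 hd1
        have hd1' : d1 ≠ 0 := (Finset.mem_filter.mp hd1).2
        rw [Finset.sum_eq_single_of_mem (-d1) ?_ ?_]
        · have hcond : d1⁻¹ + (-d1)⁻¹ = 0 := by rw [inv_neg]; ring
          rw [if_pos hcond]
          have : m1 * d1 + m2 * (-d1) = d1 * (m1 - m2) := by ring
          rw [← eZMod_add, this]
        · simp only [hSdef, Finset.mem_filter, Finset.mem_univ, true_and]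
          exact neg_ne_zero.mpr hd1'
        · intro d2 hd2 hne
          have : ¬ (d1⁻¹ + d2⁻¹ = 0) := by
            intro hc
            apply hne
            have : d2⁻¹ = (-d1)⁻¹ := by rw [inv_neg]; linear_combination hc
            exact inv_injective this
          rw [if_neg this, mul_zero]
      rw [Finset.sum_congr rfl inner, ← Finset.sum_mul]
      have : ∑ d1 ∈ S, eZMod N (d1 * (m1 - m2)) = if m1 - m2 = 0 then ((N:ℂ) - 1) else -1 :=
        sum_S_e (m1 - m2)
      rw [this]
      by_cases hmm : m1 = m2
      · rw [if_pos (sub_eq_zero.mpr hmm), if_pos hmm]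
      · rw [if_neg (fun hc => hmm (sub_eq_zero.mp hc)), if_neg hmm]
        ring
    · simp [hχ]
  -- A-term: reindex d1 = u * d2
  have hM : ∑ d1 ∈ S, ∑ d2 ∈ S, (eZMod N (m1 * d1) * eZMod N (m2 * d2)) *
          ((starRingEnd ℂ) (χ (d1⁻¹ + d2⁻¹)) * G')
      = G' * ∑ u ∈ S, (starRingEnd ℂ) (χ (u⁻¹ + 1)) *
          ∑ d ∈ S, χ d * eZMod N (d * (m1 * u + m2)) := by
    rw [Finset.sum_comm]
    have per : ∀ d2 ∈ S, (∑ d1 ∈ S, (eZMod N (m1 * d1) * eZMod N (m2 * d2)) *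
            ((starRingEnd ℂ) (χ (d1⁻¹ + d2⁻¹)) * G'))
        = ∑ u ∈ S, G' * ((starRingEnd ℂ) (χ (u⁻¹ + 1)) *
            (χ d2 * eZMod N (d2 * (m1 * u + m2)))) := by
      intro d2 hd2
      have hd2' : d2 ≠ 0 := (Finset.mem_filter.mp hd2).2
      have reindex : (∑ d1 ∈ S, (eZMod N (m1 * d1) * eZMod N (m2 * d2)) *
              ((starRingEnd ℂ) (χ (d1⁻¹ + d2⁻¹)) * G'))
          = ∑ u ∈ S, (eZMod N (m1 * (u * d2)) * eZMod N (m2 * d2)) *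
              ((starRingEnd ℂ) (χ ((u * d2)⁻¹ + d2⁻¹)) * G') := by
        refine Finset.sum_nbij' (fun d1 => d1 * d2⁻¹) (fun u => u * d2) ?_ ?_ ?_ ?_ ?_
        · intro d1 hd1
          simp only [hSdef, Finset.mem_filter, Finset.mem_univ, true_and] at hd1 ⊢
          exact mul_ne_zero hd1 (inv_ne_zero hd2')
        · intro u hu
          simp only [hSdef, Finset.mem_filter, Finset.mem_univ, true_and] at hu ⊢
          exact mul_ne_zero hu hd2'
        · intro d1 _; field_simp
        · intro u _; field_simp
        · intro d1 _
          simp only [inv_mul_cancel_right₀ hd2']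
      rw [reindex]
      refine Finset.sum_congr rfl (fun u hu => ?_)
      have hu' : u ≠ 0 := (Finset.mem_filter.mp hu).2
      have harg : (u * d2)⁻¹ + d2⁻¹ = d2⁻¹ * (u⁻¹ + 1) := by
        field_simp
      have hexp : m1 * (u * d2) + m2 * d2 = d2 * (m1 * u + m2) := by ring
      have hconj : (starRingEnd ℂ) (χ ((u * d2)⁻¹ + d2⁻¹))
          = χ d2 * (starRingEnd ℂ) (χ (u⁻¹ + 1)) := by
        rw [harg, map_mul, map_mul, conj_chi_eq_inv χ (inv_ne_zero hd2'), inv_inv]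
      rw [hconj, ← eZMod_add, hexp]
      ring
    rw [Finset.sum_congr rfl per, Finset.sum_comm, Finset.mul_sum]
    refine Finset.sum_congr rfl (fun u _ => ?_)
    rw [← Finset.mul_sum, ← Finset.mul_sum]
  -- split the inner sum with g_eq
  have hMsplit : ∑ u ∈ S, (starRingEnd ℂ) (χ (u⁻¹ + 1)) *
          ∑ d ∈ S, χ d * eZMod N (d * (m1 * u + m2))
      = (∑ u ∈ S, (starRingEnd ℂ) (χ (u⁻¹ + 1)) * (starRingEnd ℂ) (χ (m1 * u + m2))) * G'
        + ∑ u ∈ S, (starRingEnd ℂ) (χ (u⁻¹ + 1)) *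
            (if χ = 1 ∧ m1 * u + m2 = 0 then ((N : ℂ) - 1) else 0) := by
    rw [Finset.sum_mul, ← Finset.sum_add_distrib]
    refine Finset.sum_congr rfl (fun u _ => ?_)
    rw [g_eq χ (m1 * u + m2)]
    ring
  -- the exceptional M2 term
  have hM2 : ∑ u ∈ S, (starRingEnd ℂ) (χ (u⁻¹ + 1)) *
          (if χ = 1 ∧ m1 * u + m2 = 0 then ((N : ℂ) - 1) else 0)
      = (if χ = 1 then (1:ℂ) else 0) * (if m1 = m2 then 0 else ((N : ℂ) - 1)) := by
    by_cases hχ : χ = 1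
    · simp only [hχ, true_and, if_true, one_mul]
      have hu0 : -(m2 * m1⁻¹) ≠ 0 := neg_ne_zero.mpr (mul_ne_zero hm2 (inv_ne_zero hm1))
      rw [Finset.sum_eq_single_of_mem (-(m2 * m1⁻¹)) ?_ ?_]
      · have hcond : m1 * -(m2 * m1⁻¹) + m2 = 0 := by
          rw [mul_comm m2 m1⁻¹, mul_neg, mul_inv_cancel_left₀ hm1, neg_add_cancel]
        rw [if_pos hcond]
        have hval : (-(m2 * m1⁻¹))⁻¹ + 1 = (m2 - m1) * m2⁻¹ := by
          rw [inv_neg, mul_inv, inv_inv, sub_mul, mul_inv_cancel₀ hm2]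
          ring
        rw [hval]
        by_cases hmm : m1 = m2
        · have : (m2 - m1) * m2⁻¹ = 0 := by rw [hmm, sub_self, zero_mul]
          rw [this, if_pos hmm]
          rw [(1 : DirichletCharacter ℂ N).map_nonunit not_isUnit_zero, map_zero, zero_mul]
        · have hne : (m2 - m1) * m2⁻¹ ≠ 0 :=
            mul_ne_zero (sub_ne_zero.mpr (fun hc => hmm hc.symm)) (inv_ne_zero hm2)
          rw [if_neg hmm, MulChar.one_apply (isUnit_iff_ne_zero.mpr hne), map_one, one_mul]
      · simp only [hSdef, Finset.mem_filter, Finset.mem_univ, true_and]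
        exact hu0
      · intro u _ hne
        have : ¬ (m1 * u + m2 = 0) := by
          intro hc
          apply hne
          have hmu : m1 * u = m1 * -(m2 * m1⁻¹) := by
            have : m1 * -(m2 * m1⁻¹) = -m2 := by
              rw [mul_comm m2 m1⁻¹, mul_neg, mul_inv_cancel_left₀ hm1]
            rw [this]
            linear_combination hc
          exact mul_left_cancel₀ hm1 hmu
        rw [if_neg this, mul_zero]
    · simp [hχ]
  -- reindex u ↦ u⁻¹
  have hMinv : ∑ u ∈ S, (starRingEnd ℂ) (χ (u⁻¹ + 1)) * (starRingEnd ℂ) (χ (m1 * u + m2))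
      = ∑ u ∈ S, (starRingEnd ℂ) (χ (u + 1)) * (starRingEnd ℂ) (χ (m1 * u⁻¹ + m2)) := by
    refine Finset.sum_nbij' (fun u => u⁻¹) (fun u => u⁻¹) ?_ ?_ ?_ ?_ ?_
    · intro u hu
      simp only [hSdef, Finset.mem_filter, Finset.mem_univ, true_and] at hu ⊢
      exact inv_ne_zero hu
    · intro u hu
      simp only [hSdef, Finset.mem_filter, Finset.mem_univ, true_and] at hu ⊢
      exact inv_ne_zero hu
    · intro u _; exact inv_inv u
    · intro u _; exact inv_inv u
    · intro u _
      rw [inv_inv]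
  -- transfer of the RHS sum
  have hRHS : ∑ u ∈ (Finset.range N).filter (fun u => Nat.gcd u N = 1),
        (starRingEnd ℂ) (χ (((u : ℕ) : ZMod N) + 1)) *
          (starRingEnd ℂ) (χ (m1 * (((u : ℕ) : ZMod N))⁻¹ + m2))
      = ∑ u ∈ S, (starRingEnd ℂ) (χ (u + 1)) * (starRingEnd ℂ) (χ (m1 * u⁻¹ + m2)) :=
    sum_range_units (f := fun u => (starRingEnd ℂ) (χ (u + 1)) *
      (starRingEnd ℂ) (χ (m1 * u⁻¹ + m2)))
  -- arithmetic helpers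
  have hdvd : ((N : ℤ) ∣ n1 - n2) ↔ m1 = m2 := by
    rw [← ZMod.intCast_zmod_eq_zero_iff_dvd]
    push_cast
    rw [sub_eq_zero]
  have htot : (N.totient : ℂ) = (N : ℂ) - 1 := by
    rw [Nat.totient_prime hN, Nat.cast_sub hN.one_lt.le, Nat.cast_one]
  -- final assembly
  rw [step1, step2, hM, hMsplit, hM2, hB, hMinv, hG, hRHS]
  simp only [hdvd, htot]
  by_cases hχ : χ = 1
  · rw [hG1 hχ]
    simp only [hχ, if_true]
    by_cases hmm : m1 = m2
    · rw [if_pos hmm, if_pos hmm, if_pos hmm]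
      ring
    · rw [if_neg hmm, if_neg hmm, if_neg hmm]
      ring
  · simp only [if_neg hχ]
    ring
end

section
/- Define ψ(n1, n2, r) := Σ_{u mod r, gcd(u,r)=1} R(u + n1, r) · R(u + n2, r). Then ψ is multiplicative in its third argument: for all integers n1, n2 and all coprime positive integers s and t, ψ(n1, n2, s·t) = ψ(n1, n2, s) · ψ(n1, n2, t). -/
/-- `ψ(n1, n2, r) = Σ_{u mod r, (u,r)=1} R(u + n1, r) R(u + n2, r)`. -/
noncomputable def psiSum (n1 n2 : ℤ) (r : ℕ) : ℂ :=
  ∑ u ∈ (Finset.range r).filter (fun u => Nat.gcd u r = 1),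
    ramanujanS r (((u : ℕ) : ZMod r) + (n1 : ZMod r)) *
      ramanujanS r (((u : ℕ) : ZMod r) + (n2 : ZMod r))

/- ### Auxiliary lemmas -/

lemma sum_coprime_eq_sum_units (q : ℕ) [NeZero q] (f : ZMod q → ℂ) :
    ∑ a ∈ (Finset.range q).filter (fun a => Nat.gcd a q = 1), f (a : ℕ) =
      ∑ u : (ZMod q)ˣ, f (u : ZMod q) := by
  refine Finset.sum_bij' (fun a ha => ZMod.unitOfCoprime a (Finset.mem_filter.mp ha).2)
    (fun u _ => (u : ZMod q).val) ?_ ?_ ?_ ?_ ?_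
  · intro a ha; exact Finset.mem_univ _
  · intro u _
    simp only [Finset.mem_filter, Finset.mem_range]
    exact ⟨ZMod.val_lt _, ZMod.val_coe_unit_coprime u⟩
  · intro a ha
    simp only [ZMod.coe_unitOfCoprime]
    exact ZMod.val_natCast_of_lt (Finset.mem_range.mp (Finset.mem_filter.mp ha).1)
  · intro u _
    apply Units.ext
    simp [ZMod.coe_unitOfCoprime, ZMod.natCast_val, ZMod.cast_id]
  · intro a ha
    exact congrArg f (ZMod.coe_unitOfCoprime a _).symm

lemma eZMod_intCast (q : ℕ) [NeZero q] (m : ℤ) :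
    eZMod q ((m : ZMod q)) = Complex.exp (2 * Real.pi * Complex.I * (m : ℂ) / (q : ℂ)) := by
  obtain ⟨k, hk⟩ : (q : ℤ) ∣ (((m : ZMod q).val : ℤ) - m) := by
    rw [← ZMod.intCast_zmod_eq_zero_iff_dvd]
    push_cast [ZMod.natCast_val, ZMod.cast_id]
    ring
  have hq : (q : ℂ) ≠ 0 := Nat.cast_ne_zero.mpr (NeZero.ne q)
  have hval : ((m : ZMod q).val : ℂ) = (m : ℂ) + (q : ℂ) * (k : ℂ) := by
    have : ((m : ZMod q).val : ℤ) = m + q * k := by linarith [hk]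
    exact_mod_cast congrArg (Int.cast : ℤ → ℂ) this
  rw [eZMod, hval]
  rw [show 2 * Real.pi * Complex.I * ((m : ℂ) + (q : ℂ) * (k : ℂ)) / (q : ℂ)
      = 2 * Real.pi * Complex.I * (m : ℂ) / (q : ℂ) + (k : ℂ) * (2 * Real.pi * Complex.I) by
    field_simp]
  rw [Complex.exp_add, Complex.exp_int_mul_two_pi_mul_I, mul_one]

section
variable (s t : ℕ) [NeZero s] [NeZero t]

set_option linter.unusedSectionVars false

lemma bezout (hst : Nat.Coprime s t) :
    (s : ℤ) * Int.gcdA s t + (t : ℤ) * Int.gcdB s t = 1 := by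
  have := Int.gcd_eq_gcd_ab (s : ℤ) (t : ℤ)
  rw [Int.gcd_natCast_natCast, hst] at this
  exact_mod_cast this.symm

lemma eZMod_split (hst : Nat.Coprime s t) (x : ZMod (s * t)) :
    eZMod (s * t) x
      = eZMod s (((Int.gcdB s t : ZMod s)) * ZMod.castHom (dvd_mul_right s t) (ZMod s) x)
      * eZMod t (((Int.gcdA s t : ZMod t)) * ZMod.castHom (dvd_mul_left t s) (ZMod t) x) := by
  haveI : NeZero (s * t) := ⟨mul_ne_zero (NeZero.ne s) (NeZero.ne t)⟩
  set m : ℤ := ((x.val : ℤ)) with hm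
  have hx : ((m : ℤ) : ZMod (s * t)) = x := by
    simp [hm, ZMod.natCast_val, ZMod.cast_id]
  set A := Int.gcdA s t; set B := Int.gcdB s t
  have h1 : ZMod.castHom (dvd_mul_right s t) (ZMod s) x = ((m : ZMod s)) := by
    rw [← hx, map_intCast]
  have h2 : ZMod.castHom (dvd_mul_left t s) (ZMod t) x = ((m : ZMod t)) := by
    rw [← hx, map_intCast]
  rw [h1, h2, ← hx]
  rw [show ((B : ZMod s)) * ((m : ZMod s)) = (((B * m : ℤ) : ZMod s)) by push_cast; ring]
  rw [show ((A : ZMod t)) * ((m : ZMod t)) = (((A * m : ℤ) : ZMod t)) by push_cast; ring]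
  rw [eZMod_intCast, eZMod_intCast, eZMod_intCast, ← Complex.exp_add]
  congr 1
  have hb : ((s : ℂ)) * (A : ℂ) + ((t : ℂ)) * (B : ℂ) = 1 := by
    exact_mod_cast congrArg (Int.cast : ℤ → ℂ) (bezout s t hst)
  have hsc : (s : ℂ) ≠ 0 := Nat.cast_ne_zero.mpr (NeZero.ne s)
  have htc : (t : ℂ) ≠ 0 := Nat.cast_ne_zero.mpr (NeZero.ne t)
  push_cast
  field_simp
  linear_combination (-(m : ℂ)) * hb

noncomputable def unitsCRT (hst : Nat.Coprime s t) :
    (ZMod (s * t))ˣ ≃* (ZMod s)ˣ × (ZMod t)ˣ :=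
  (Units.mapEquiv (ZMod.chineseRemainder hst).toMulEquiv).trans MulEquiv.prodUnits

lemma unitsCRT_symm_fst (hst : Nat.Coprime s t) (p : (ZMod s)ˣ × (ZMod t)ˣ) :
    ZMod.castHom (dvd_mul_right s t) (ZMod s) (((unitsCRT s t hst).symm p : ZMod (s * t)))
      = (p.1 : ZMod s) := by
  set u := (unitsCRT s t hst).symm p with hu
  have h : (unitsCRT s t hst) u = p := MulEquiv.apply_symm_apply _ _
  have key : (((unitsCRT s t hst) u).1 : ZMod s) = ZMod.cast (u : ZMod (s * t)) := by
    simp [unitsCRT, MulEquiv.prodUnits, Units.mapEquiv, ZMod.chineseRemainder,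
      Prod.fst_zmod_cast]
  rw [ZMod.castHom_apply, ← key, h]

lemma unitsCRT_symm_snd (hst : Nat.Coprime s t) (p : (ZMod s)ˣ × (ZMod t)ˣ) :
    ZMod.castHom (dvd_mul_left t s) (ZMod t) (((unitsCRT s t hst).symm p : ZMod (s * t)))
      = (p.2 : ZMod t) := by
  set u := (unitsCRT s t hst).symm p with hu
  have h : (unitsCRT s t hst) u = p := MulEquiv.apply_symm_apply _ _
  have key : (((unitsCRT s t hst) u).2 : ZMod t) = ZMod.cast (u : ZMod (s * t)) := by
    simp [unitsCRT, MulEquiv.prodUnits, Units.mapEquiv, ZMod.chineseRemainder,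
      Prod.snd_zmod_cast]
  rw [ZMod.castHom_apply, ← key, h]

end

lemma ramS_eq_sum_units (q : ℕ) [NeZero q] (n : ZMod q) :
    ramanujanS q n = ∑ u : (ZMod q)ˣ, eZMod q ((u : ZMod q) * n) :=
  sum_coprime_eq_sum_units q (fun x => eZMod q (x * n))

lemma sum_units_mul_left (q : ℕ) [NeZero q] (v : (ZMod q)ˣ) (F : ZMod q → ℂ) :
    ∑ u : (ZMod q)ˣ, F ((v : ZMod q) * (u : ZMod q)) = ∑ u : (ZMod q)ˣ, F (u : ZMod q) := by
  refine Fintype.sum_equiv (Equiv.mulLeft v) _ _ (fun u => ?_)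
  simp [Units.val_mul]

section
variable (s t : ℕ) [NeZero s] [NeZero t]

set_option linter.unusedSectionVars false

/-- `gcdB s t` is a unit mod `s`. -/
noncomputable def unitB (hst : Nat.Coprime s t) : (ZMod s)ˣ :=
  Units.mkOfMulEqOne ((Int.gcdB s t : ZMod s)) ((t : ZMod s)) (by
    have := bezout s t hst
    have h := congrArg (Int.cast : ℤ → ZMod s) this
    push_cast at h
    rw [ZMod.natCast_self] at h
    simpa [mul_comm] using h)

/-- `gcdA s t` is a unit mod `t`. -/
noncomputable def unitA (hst : Nat.Coprime s t) : (ZMod t)ˣ :=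
  Units.mkOfMulEqOne ((Int.gcdA s t : ZMod t)) ((s : ZMod t)) (by
    have := bezout s t hst
    have h := congrArg (Int.cast : ℤ → ZMod t) this
    push_cast at h
    rw [ZMod.natCast_self] at h
    simpa [mul_comm] using h)

lemma ram_mul (hst : Nat.Coprime s t) (n : ZMod (s * t)) :
    ramanujanS (s * t) n
      = ramanujanS s (ZMod.castHom (dvd_mul_right s t) (ZMod s) n)
      * ramanujanS t (ZMod.castHom (dvd_mul_left t s) (ZMod t) n) := by
  haveI : NeZero (s * t) := ⟨mul_ne_zero (NeZero.ne s) (NeZero.ne t)⟩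
  set ns := ZMod.castHom (dvd_mul_right s t) (ZMod s) n with hns
  set nt := ZMod.castHom (dvd_mul_left t s) (ZMod t) n with hnt
  set B := (Int.gcdB s t : ZMod s)
  set A := (Int.gcdA s t : ZMod t)
  rw [ramS_eq_sum_units, ramS_eq_sum_units, ramS_eq_sum_units]
  have step1 : ∀ u : (ZMod (s * t))ˣ,
      eZMod (s * t) ((u : ZMod (s * t)) * n)
        = eZMod s (B * (ZMod.castHom (dvd_mul_right s t) (ZMod s) (u : ZMod (s * t)) * ns))
        * eZMod t (A * (ZMod.castHom (dvd_mul_left t s) (ZMod t) (u : ZMod (s * t)) * nt)) := by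
    intro u
    rw [eZMod_split s t hst, map_mul, map_mul]
  simp only [step1]
  rw [← Equiv.sum_comp (unitsCRT s t hst).symm.toEquiv]
  simp only [MulEquiv.toEquiv_eq_coe, EquivLike.coe_coe]
  have step2 : ∀ p : (ZMod s)ˣ × (ZMod t)ˣ,
      eZMod s (B * (ZMod.castHom (dvd_mul_right s t) (ZMod s)
          (((unitsCRT s t hst).symm p : ZMod (s * t))) * ns))
        * eZMod t (A * (ZMod.castHom (dvd_mul_left t s) (ZMod t)
          (((unitsCRT s t hst).symm p : ZMod (s * t))) * nt))
      = eZMod s ((B * (p.1 : ZMod s)) * ns) * eZMod t ((A * (p.2 : ZMod t)) * nt) := by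
    intro p
    rw [unitsCRT_symm_fst, unitsCRT_symm_snd, mul_assoc, mul_assoc]
  simp only [step2]
  rw [Fintype.sum_prod_type]
  rw [show (∑ u1 : (ZMod s)ˣ, ∑ u2 : (ZMod t)ˣ,
      eZMod s ((B * (u1 : ZMod s)) * ns) * eZMod t ((A * (u2 : ZMod t)) * nt))
      = (∑ u1 : (ZMod s)ˣ, eZMod s ((B * (u1 : ZMod s)) * ns))
      * (∑ u2 : (ZMod t)ˣ, eZMod t ((A * (u2 : ZMod t)) * nt)) by
    rw [Finset.sum_mul_sum]]
  congr 1
  · have := sum_units_mul_left s (unitB s t hst) (fun x => eZMod s (x * ns))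
    simpa [unitB] using this
  · have := sum_units_mul_left t (unitA s t hst) (fun x => eZMod t (x * nt))
    simpa [unitA] using this

end

/-- `ψ(n1, n2, ·)` is multiplicative: for coprime positive `s, t`,
`ψ(n1, n2, s·t) = ψ(n1, n2, s) · ψ(n1, n2, t)`. -/
theorem stmt10 (n1 n2 : ℤ) (s t : ℕ) (hs : 0 < s) (ht : 0 < t) (hst : Nat.Coprime s t) :
    psiSum n1 n2 (s * t) = psiSum n1 n2 s * psiSum n1 n2 t := by
  haveI : NeZero s := ⟨hs.ne'⟩
  haveI : NeZero t := ⟨ht.ne'⟩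
  haveI : NeZero (s * t) := ⟨mul_ne_zero (NeZero.ne s) (NeZero.ne t)⟩
  unfold psiSum
  rw [sum_coprime_eq_sum_units (s * t)
    (fun x => ramanujanS (s * t) (x + (n1 : ZMod (s * t))) *
      ramanujanS (s * t) (x + (n2 : ZMod (s * t)))),
    sum_coprime_eq_sum_units s
    (fun x => ramanujanS s (x + (n1 : ZMod s)) * ramanujanS s (x + (n2 : ZMod s))),
    sum_coprime_eq_sum_units t
    (fun x => ramanujanS t (x + (n1 : ZMod t)) * ramanujanS t (x + (n2 : ZMod t)))]
  have cast_add1 : ∀ (m : ℤ) (u : ZMod (s * t)),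
      ZMod.castHom (dvd_mul_right s t) (ZMod s) (u + (m : ZMod (s * t)))
        = ZMod.castHom (dvd_mul_right s t) (ZMod s) u + (m : ZMod s) := by
    intro m u; rw [map_add, map_intCast]
  have cast_add2 : ∀ (m : ℤ) (u : ZMod (s * t)),
      ZMod.castHom (dvd_mul_left t s) (ZMod t) (u + (m : ZMod (s * t)))
        = ZMod.castHom (dvd_mul_left t s) (ZMod t) u + (m : ZMod t) := by
    intro m u; rw [map_add, map_intCast]
  have step1 : ∀ u : (ZMod (s * t))ˣ,
      ramanujanS (s * t) ((u : ZMod (s * t)) + (n1 : ZMod (s * t))) *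
        ramanujanS (s * t) ((u : ZMod (s * t)) + (n2 : ZMod (s * t)))
      = (ramanujanS s (ZMod.castHom (dvd_mul_right s t) (ZMod s) (u : ZMod (s * t)) + (n1 : ZMod s)) *
         ramanujanS s (ZMod.castHom (dvd_mul_right s t) (ZMod s) (u : ZMod (s * t)) + (n2 : ZMod s))) *
        (ramanujanS t (ZMod.castHom (dvd_mul_left t s) (ZMod t) (u : ZMod (s * t)) + (n1 : ZMod t)) *
         ramanujanS t (ZMod.castHom (dvd_mul_left t s) (ZMod t) (u : ZMod (s * t)) + (n2 : ZMod t))) := by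
    intro u
    rw [ram_mul s t hst, ram_mul s t hst, cast_add1, cast_add1, cast_add2, cast_add2]
    ring
  simp only [step1]
  rw [← Equiv.sum_comp (unitsCRT s t hst).symm.toEquiv]
  simp only [MulEquiv.toEquiv_eq_coe, EquivLike.coe_coe]
  have step2 : ∀ p : (ZMod s)ˣ × (ZMod t)ˣ,
      (ramanujanS s (ZMod.castHom (dvd_mul_right s t) (ZMod s)
          (((unitsCRT s t hst).symm p : ZMod (s * t))) + (n1 : ZMod s)) *
       ramanujanS s (ZMod.castHom (dvd_mul_right s t) (ZMod s)
          (((unitsCRT s t hst).symm p : ZMod (s * t))) + (n2 : ZMod s))) *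
      (ramanujanS t (ZMod.castHom (dvd_mul_left t s) (ZMod t)
          (((unitsCRT s t hst).symm p : ZMod (s * t))) + (n1 : ZMod t)) *
       ramanujanS t (ZMod.castHom (dvd_mul_left t s) (ZMod t)
          (((unitsCRT s t hst).symm p : ZMod (s * t))) + (n2 : ZMod t)))
      = (ramanujanS s ((p.1 : ZMod s) + (n1 : ZMod s)) *
         ramanujanS s ((p.1 : ZMod s) + (n2 : ZMod s))) *
        (ramanujanS t ((p.2 : ZMod t) + (n1 : ZMod t)) *
         ramanujanS t ((p.2 : ZMod t) + (n2 : ZMod t))) := by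
    intro p
    rw [unitsCRT_symm_fst, unitsCRT_symm_snd]
  simp only [step2]
  rw [Fintype.sum_prod_type]
  exact (Finset.sum_mul_sum Finset.univ Finset.univ
    (fun u1 : (ZMod s)ˣ => ramanujanS s ((u1 : ZMod s) + (n1 : ZMod s)) *
      ramanujanS s ((u1 : ZMod s) + (n2 : ZMod s)))
    (fun u2 : (ZMod t)ˣ => ramanujanS t ((u2 : ZMod t) + (n1 : ZMod t)) *
      ramanujanS t ((u2 : ZMod t) + (n2 : ZMod t)))).symm
end

section
/- For every prime p, every integer α ≥ 2, and all integers n1, n2, one has Σ_{u mod p^{α−1}} R(u·p + n1, p^α) · R(u·p + n2, p^α) = p^α · R(n1 − n2, p^α) if p | n2, and the sum equals 0 if p ∤ n2. Here the sum runs over all residues u modulo p^{α−1}. -/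
noncomputable def eI (q : ℕ) (n : ℤ) : ℂ :=
  Complex.exp (2 * Real.pi * Complex.I * (n : ℂ) / (q : ℂ))

lemma eI_add (q : ℕ) (m n : ℤ) : eI q (m + n) = eI q m * eI q n := by
  rw [eI, eI, eI, ← Complex.exp_add]
  congr 1
  push_cast
  ring

lemma eI_zero (q : ℕ) : eI q 0 = 1 := by
  simp [eI]

lemma eI_dvd (q : ℕ) (hq : q ≠ 0) {n : ℤ} (h : (q : ℤ) ∣ n) : eI q n = 1 := by
  obtain ⟨k, rfl⟩ := h
  have hq' : (q : ℂ) ≠ 0 := Nat.cast_ne_zero.mpr hq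
  rw [eI, show 2 * Real.pi * Complex.I * (((q : ℤ) * k : ℤ) : ℂ) / (q : ℂ)
      = (k : ℂ) * (2 * Real.pi * Complex.I) by push_cast; field_simp]
  exact Complex.exp_int_mul_two_pi_mul_I k

lemma eI_eq_one_iff (q : ℕ) (hq : q ≠ 0) (n : ℤ) : eI q n = 1 ↔ (q : ℤ) ∣ n := by
  constructor
  · intro h
    rw [eI, Complex.exp_eq_one_iff] at h
    obtain ⟨k, hk⟩ := h
    have hq' : (q : ℂ) ≠ 0 := Nat.cast_ne_zero.mpr hq
    have hpi : (2 : ℂ) * Real.pi * Complex.I ≠ 0 := by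
      simp [Real.pi_ne_zero, Complex.I_ne_zero]
    have h2 : (2 * (Real.pi:ℂ) * Complex.I) * ((n : ℂ) / q) = (2 * (Real.pi:ℂ) * Complex.I) * k := by
      rw [show (2 * (Real.pi:ℂ) * Complex.I) * ((n : ℂ) / q) = 2 * Real.pi * Complex.I * n / q by ring, hk]; ring
    have h3 : (n : ℂ) / q = k := mul_left_cancel₀ hpi h2
    have h4 : (n : ℂ) = (k : ℂ) * q := by
      field_simp at h3
      linear_combination h3
    have hnk : (n : ℤ) = k * q := by exact_mod_cast h4
    exact ⟨k, by linarith⟩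
  · exact eI_dvd q hq

lemma eI_congr (q : ℕ) (hq : q ≠ 0) {m n : ℤ} (h : (q : ℤ) ∣ (m - n)) : eI q m = eI q n := by
  have hm : m = n + (m - n) := by ring
  rw [hm, eI_add, eI_dvd q hq h, mul_one]

lemma eI_pow (q : ℕ) (n : ℤ) (k : ℕ) : eI q (n * k) = eI q n ^ k := by
  induction k with
  | zero => simp [eI_zero]
  | succ k ih =>
      have h : n * ((k : ℕ) + 1 : ℤ) = n * k + n := by ring
      push_cast
      rw [h, eI_add, ih, pow_succ]

lemma eZMod_int (q : ℕ) [NeZero q] (z : ℤ) : eZMod q ((z : ZMod q)) = eI q z := by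
  have hq : q ≠ 0 := NeZero.ne q
  have h1 : eZMod q ((z : ZMod q)) = eI q (((z : ZMod q).val : ℤ)) := by
    rw [eZMod, eI]; push_cast; ring_nf
  rw [h1]
  apply eI_congr q hq
  have : ((((z : ZMod q).val : ℤ) - z : ℤ) : ZMod q) = 0 := by
    push_cast
    simp [ZMod.natCast_val, ZMod.cast_id]
  exact (ZMod.intCast_zmod_eq_zero_iff_dvd _ q).mp this

lemma geom_orth (N : ℕ) (z : ℂ) (hz : z ^ N = 1) :
    ∑ u ∈ Finset.range N, z ^ u = if z = 1 then (N : ℂ) else 0 := by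
  split_ifs with h
  · simp [h]
  · rw [geom_sum_eq h, hz]
    simp

lemma nat_key (a M t : ℕ) (h : a % M < M) :
    a + ((M - a % M) + t * M) = M * (a / M + 1 + t) := by
  zify [le_of_lt h]
  linear_combination - Int.mul_ediv_add_emod (a:ℤ) (M:ℤ)

lemma nat_mods (a b M : ℕ) (h : M ∣ a + b) : M ∣ a % M + b % M := by
  obtain ⟨k, hk⟩ := h
  rw [← Int.natCast_dvd_natCast]
  refine ⟨(k : ℤ) - (a:ℤ)/(M:ℤ) - (b:ℤ)/(M:ℤ), ?_⟩
  have hk' : (a:ℤ) + b = M * k := by exact_mod_cast hk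
  push_cast
  linear_combination hk' + Int.mul_ediv_add_emod (a:ℤ) (M:ℤ) + Int.mul_ediv_add_emod (b:ℤ) (M:ℤ)

/-- For a prime `p`, `α ≥ 2` and integers `n1, n2`:
`Σ_{u mod p^{α−1}} R(u·p + n1, p^α) R(u·p + n2, p^α)` equals `p^α·R(n1 − n2, p^α)`
if `p ∣ n2`, and equals `0` if `p ∤ n2`. -/
theorem stmt14 (p : ℕ) (hp : p.Prime) (α : ℕ) (hα : 2 ≤ α) (n1 n2 : ℤ) :
    ∑ u ∈ Finset.range (p ^ (α - 1)),
        ramanujanS (p ^ α) (((u * p : ℕ) : ZMod (p ^ α)) + (n1 : ZMod (p ^ α))) *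
          ramanujanS (p ^ α) (((u * p : ℕ) : ZMod (p ^ α)) + (n2 : ZMod (p ^ α))) =
      if (p : ℤ) ∣ n2 then ((p : ℂ) ^ α) * ramanujanS (p ^ α) ((n1 - n2 : ℤ) : ZMod (p ^ α))
      else 0 := by
  have hp2 : 2 ≤ p := hp.two_le
  set q := p ^ α with hqdef
  set M := p ^ (α - 1) with hMdef
  have hq0 : q ≠ 0 := pow_ne_zero _ (by omega)
  have hM0 : M ≠ 0 := pow_ne_zero _ (by omega)
  have hMpos : 0 < M := Nat.pos_of_ne_zero hM0
  have hMq : M * p = q := by rw [hMdef, hqdef, ← pow_succ]; congr 1; omega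
  have hqz : ((q : ℕ) : ℤ) = (M : ℤ) * p := by exact_mod_cast hMq.symm
  have hpM : p ∣ M := dvd_pow_self p (by omega)
  haveI : NeZero q := ⟨hq0⟩
  set A := (Finset.range q).filter (fun a => Nat.gcd a q = 1) with hA
  clear_value M q
  -- rewrite Ramanujan sums through eI
  have hram : ∀ (n : ℤ) (x : ZMod q), x = ((n : ℤ) : ZMod q) →
      ramanujanS q x = ∑ a ∈ A, eI q ((a : ℤ) * n) := by
    intro n x hx
    rw [ramanujanS, hx, ← hA]
    refine Finset.sum_congr rfl fun a _ => ?_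
    have h1 : ((a : ℕ) : ZMod q) * ((n : ℤ) : ZMod q) = (((a : ℤ) * n : ℤ) : ZMod q) := by
      push_cast; ring
    rw [h1, eZMod_int]
  have step1 : ∀ u : ℕ,
      ramanujanS q (((u * p : ℕ) : ZMod q) + (n1 : ZMod q)) *
        ramanujanS q (((u * p : ℕ) : ZMod q) + (n2 : ZMod q)) =
      ∑ a ∈ A, ∑ b ∈ A,
        eI q ((a : ℤ) * n1 + (b : ℤ) * n2) * eI q (((a : ℤ) + (b : ℤ)) * (p : ℤ)) ^ u := by
    intro u
    rw [hram ((u : ℤ) * p + n1) _ (by push_cast; ring),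
        hram ((u : ℤ) * p + n2) _ (by push_cast; ring),
        Finset.sum_mul_sum]
    refine Finset.sum_congr rfl fun a _ => Finset.sum_congr rfl fun b _ => ?_
    rw [← eI_pow, ← eI_add, ← eI_add]
    congr 1
    push_cast
    ring
  have horth : ∀ a b : ℕ,
      ∑ u ∈ Finset.range M, eI q (((a : ℤ) + b) * (p : ℤ)) ^ u
        = if M ∣ a + b then (M : ℂ) else 0 := by
    intro a b
    have hz : eI q (((a : ℤ) + b) * (p : ℤ)) ^ M = 1 := by
      rw [← eI_pow]
      refine eI_dvd q hq0 ⟨(a : ℤ) + b, ?_⟩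
      rw [hqz]; ring
    rw [geom_orth M _ hz]
    refine if_congr ?_ rfl rfl
    rw [eI_eq_one_iff q hq0]
    have hpz : (p : ℤ) ≠ 0 := by exact_mod_cast (by omega : p ≠ 0)
    rw [hqz, show ((a : ℤ) + b) * (p : ℤ) = (((a + b : ℕ) : ℤ)) * p by push_cast; ring,
        mul_dvd_mul_iff_right hpz, Int.natCast_dvd_natCast]
  -- main chain
  rw [Finset.sum_congr rfl fun u _ => step1 u, Finset.sum_comm]
  have key : ∀ a ∈ A,
      ∑ u ∈ Finset.range M, ∑ b ∈ A,
        eI q ((a : ℤ) * n1 + (b : ℤ) * n2) * eI q (((a : ℤ) + (b : ℤ)) * (p : ℤ)) ^ u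
      = eI q ((a : ℤ) * n1 + ((M - a % M : ℕ) : ℤ) * n2) *
          (if (p : ℤ) ∣ n2 then (p : ℂ) else 0) * (M : ℂ) := by
    intro a ha
    obtain ⟨haq, hagcd⟩ := Finset.mem_filter.mp ha
    rw [Finset.mem_range] at haq
    have hpa : ¬ p ∣ a := by
      intro hdvd
      have hpq' : p ∣ q := by rw [hqdef]; exact dvd_pow_self p (by omega)
      have h1 : p ∣ Nat.gcd a q := Nat.dvd_gcd hdvd hpq'
      rw [hagcd] at h1
      exact absurd (Nat.le_of_dvd one_pos h1) (by omega)
    have hamod0 : a % M ≠ 0 := fun h => hpa (dvd_trans hpM (Nat.dvd_of_mod_eq_zero h))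
    have hamodlt : a % M < M := Nat.mod_lt _ hMpos
    rw [Finset.sum_comm]
    have hb1 : ∀ b ∈ A,
        ∑ u ∈ Finset.range M,
          eI q ((a : ℤ) * n1 + (b : ℤ) * n2) * eI q (((a : ℤ) + (b : ℤ)) * (p : ℤ)) ^ u
        = eI q ((a : ℤ) * n1 + (b : ℤ) * n2) * (if M ∣ a + b then (M : ℂ) else 0) := by
      intro b _
      rw [← Finset.mul_sum, horth]
    rw [Finset.sum_congr rfl hb1]
    have hb2 : ∑ b ∈ A.filter (fun b => M ∣ a + b), eI q ((a : ℤ) * n1 + (b : ℤ) * n2) * (M : ℂ)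
        = ∑ b ∈ A, eI q ((a : ℤ) * n1 + (b : ℤ) * n2) * (if M ∣ a + b then (M : ℂ) else 0) := by
      rw [Finset.sum_filter]
      refine Finset.sum_congr rfl fun b _ => ?_
      rw [mul_ite, mul_zero]
    rw [← hb2, ← Finset.sum_mul]
    congr 1
    -- reindex b = (M - a % M) + t * M
    have hbmod : ∀ b ∈ A.filter (fun b => M ∣ a + b), b % M = M - a % M := by
      intro b hb
      obtain ⟨hbA, hdvd⟩ := Finset.mem_filter.mp hb
      have hs := nat_mods a b M hdvd
      have hbmodlt : b % M < M := Nat.mod_lt _ hMpos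
      obtain ⟨c, hc⟩ := hs
      rcases c with _ | _ | c
      · omega
      · omega
      · exfalso
        have h2 : M * (c + 1 + 1) = M * c + M * 2 := by ring
        omega
    have hreidx : ∑ b ∈ A.filter (fun b => M ∣ a + b), eI q ((a : ℤ) * n1 + (b : ℤ) * n2)
        = ∑ t ∈ Finset.range p,
            eI q ((a : ℤ) * n1 + (((M - a % M : ℕ) : ℤ) + (t : ℤ) * (M : ℤ)) * n2) := by
      refine Finset.sum_bij' (fun b _ => b / M) (fun t _ => (M - a % M) + t * M)
        ?_ ?_ ?_ ?_ ?_
      · intro b hb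
        obtain ⟨hbA, _⟩ := Finset.mem_filter.mp hb
        obtain ⟨hbq, _⟩ := Finset.mem_filter.mp hbA
        rw [Finset.mem_range] at hbq ⊢
        rw [Nat.div_lt_iff_lt_mul hMpos]
        have : p * M = q := by rw [Nat.mul_comm]; exact hMq
        omega
      · intro t ht
        rw [Finset.mem_range] at ht
        refine Finset.mem_filter.mpr ⟨Finset.mem_filter.mpr ⟨?_, ?_⟩, ?_⟩
        · rw [Finset.mem_range]
          have h3 : (t + 1) * M = t * M + M := by ring
          have h2 : (t + 1) * M ≤ p * M := Nat.mul_le_mul_right M (by omega)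
          have h4 : p * M = q := by rw [Nat.mul_comm]; exact hMq
          omega
        · have hnot : ¬ p ∣ (M - a % M) + t * M := by
            intro hd
            have htM : p ∣ t * M := Dvd.dvd.mul_left hpM t
            have h5 : p ∣ M - a % M := by
              have := Nat.dvd_sub hd htM
              rwa [Nat.add_sub_cancel] at this
            have h6 : p ∣ a % M := by
              have h7 : a % M = M - (M - a % M) := by omega
              rw [h7]
              exact Nat.dvd_sub hpM h5
            have h8 : p ∣ a := by
              have h10 : p ∣ M * (a / M) := hpM.trans (dvd_mul_right M (a / M))
              rw [← Nat.div_add_mod a M]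
              exact Nat.dvd_add h10 h6
            exact hpa h8
          have hcop : Nat.Coprime ((M - a % M) + t * M) p :=
            Nat.coprime_comm.mp ((hp.coprime_iff_not_dvd).mpr hnot)
          rw [hqdef]
          exact hcop.pow_right α
        · exact ⟨a / M + 1 + t, nat_key a M t hamodlt⟩
      · intro b hb
        have hmb := hbmod b hb
        have h9 := Nat.div_add_mod b M
        have h10 : (b / M) * M = M * (b / M) := Nat.mul_comm _ _
        omega
      · intro t ht
        rw [Nat.add_mul_div_right _ _ hMpos,
            Nat.div_eq_of_lt (show M - a % M < M by omega)]
        omega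
      · intro b hb
        have hmb := hbmod b hb
        have h9 := Nat.div_add_mod b M
        have hnat : (M - a % M) + (b / M) * M = b := by
          have h10 : (b / M) * M = M * (b / M) := Nat.mul_comm _ _
          omega
        rw [show (((M - a % M : ℕ) : ℤ) + ((b / M : ℕ) : ℤ) * (M : ℤ)) = ((b : ℕ) : ℤ) from by
          exact_mod_cast hnat]
    rw [hreidx]
    -- evaluate the t-sum
    have hts : ∀ t : ℕ,
        eI q ((a : ℤ) * n1 + (((M - a % M : ℕ) : ℤ) + (t : ℤ) * (M : ℤ)) * n2)
        = eI q ((a : ℤ) * n1 + ((M - a % M : ℕ) : ℤ) * n2) * eI q ((M : ℤ) * n2) ^ t := by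
      intro t
      rw [← eI_pow, ← eI_add]
      congr 1
      ring
    rw [Finset.sum_congr rfl fun t _ => hts t, ← Finset.mul_sum]
    congr 1
    have hz : eI q ((M : ℤ) * n2) ^ p = 1 := by
      rw [← eI_pow]
      refine eI_dvd q hq0 ⟨n2, ?_⟩
      rw [hqz]; ring
    rw [geom_orth p _ hz]
    refine if_congr ?_ rfl rfl
    rw [eI_eq_one_iff q hq0, hqz]
    have hMz : (M : ℤ) ≠ 0 := by exact_mod_cast hM0
    exact mul_dvd_mul_iff_left hMz
  rw [Finset.sum_congr rfl key]
  by_cases hn2 : (p : ℤ) ∣ n2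
  · rw [if_pos hn2, if_pos hn2, hram (n1 - n2) _ rfl]
    have hpq : ((p : ℂ)) ^ α = ((q : ℕ) : ℂ) := by
      rw [hqdef]; push_cast; ring
    rw [hpq, Finset.mul_sum]
    refine Finset.sum_congr rfl fun a ha => ?_
    obtain ⟨haq, hagcd⟩ := Finset.mem_filter.mp ha
    have hamodlt : a % M < M := Nat.mod_lt _ hMpos
    have heq : eI q ((a : ℤ) * n1 + ((M - a % M : ℕ) : ℤ) * n2) = eI q ((a : ℤ) * (n1 - n2)) := by
      apply eI_congr q hq0
      obtain ⟨k, hk⟩ := hn2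
      refine ⟨(((a / M : ℕ) : ℤ) + 1) * k, ?_⟩
      have haRnat : a + (M - a % M) = M * (a / M + 1) := by
        simpa using nat_key a M 0 hamodlt
      have haR : (a : ℤ) + ((M - a % M : ℕ) : ℤ) = (M : ℤ) * (((a / M : ℕ) : ℤ) + 1) := by
        exact_mod_cast haRnat
      rw [hk, hqz]
      linear_combination ((p : ℤ) * k) * haR
    rw [heq]
    have : ((q : ℕ) : ℂ) = (M : ℂ) * p := by exact_mod_cast congrArg (Nat.cast (R := ℂ)) hMq.symm
    rw [this]
    ring
  · rw [if_neg hn2, if_neg hn2]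
    refine Finset.sum_eq_zero fun a _ => ?_
    ring
end
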